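/- Let S be the backward shift on K^{2n} (S e₁ = 0, S e_k = e_{k-1} for 2 ≤ k ≤ 2n, where K is ℝ or ℂ). Then S and e^S − I are similar via an invertible upper triangular matrix; in particular there exists an invertible J with S = J⁻¹(e^S − I)J. -/

import Mathlib

open Matrix Finset

namespace Stmt7Aux

variable {𝕜 : Type*} [RCLike 𝕜] {d : ℕ}

/-- The backward shift matrix. -/
def shift (𝕜 : Type*) [RCLike 𝕜] (d : ℕ) : Matrix (Fin d) (Fin d) 𝕜 :=
  Matrix.of fun i j => if (j : ℕ) = (i : ℕ) + 1 then 1 else 0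

lemma sum_ite_val (c : ℕ) (g : Fin d → 𝕜) :
    (∑ l : Fin d, if (l : ℕ) = c then g l else 0) =
      if h : c < d then g ⟨c, h⟩ else 0 := by
  split_ifs with h
  · rw [Finset.sum_eq_single (⟨c, h⟩ : Fin d)]
    · simp
    · intro b _ hb
      have : (b : ℕ) ≠ c := fun hc => hb (by simpa [Fin.ext_iff] using hc)
      simp [this]
    · simp
  · apply Finset.sum_eq_zero
    intro l _
    have hl := l.isLt
    have : (l : ℕ) ≠ c := by omega
    simp [this]

lemma shift_pow (k : ℕ) (i j : Fin d) :
    (shift 𝕜 d ^ k) i j = if (j : ℕ) = (i : ℕ) + k then 1 else 0 := by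
  induction k generalizing i j with
  | zero => simp [Matrix.one_apply, Fin.ext_iff, eq_comm]
  | succ k ih =>
    rw [pow_succ, Matrix.mul_apply]
    have h1 : ∀ l : Fin d, (shift 𝕜 d ^ k) i l * shift 𝕜 d l j
        = if (l : ℕ) = (i : ℕ) + k then (if (j : ℕ) = (l : ℕ) + 1 then 1 else 0) else 0 := by
      intro l
      rw [ih]
      simp only [shift, Matrix.of_apply]
      split_ifs <;> simp_all
    rw [Finset.sum_congr rfl (fun l _ => h1 l), sum_ite_val]
    have hj := j.isLt
    split_ifs with h h2 h3 <;> simp_all <;> omega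

lemma shift_pow_ge (k : ℕ) (hk : d ≤ k) : shift 𝕜 d ^ k = 0 := by
  ext i j
  rw [shift_pow]
  have hj := j.isLt
  have : (j : ℕ) ≠ (i : ℕ) + k := by omega
  simp [this]

/-- The unit `V` with `e^S - 1 = S * V`. -/
def Vmat (𝕜 : Type*) [RCLike 𝕜] (d : ℕ) : Matrix (Fin d) (Fin d) 𝕜 :=
  ∑ m ∈ Finset.range (d - 1), ((Nat.factorial (m + 1) : 𝕜))⁻¹ • shift 𝕜 d ^ m

lemma commute_shift_V : Commute (shift 𝕜 d) (Vmat 𝕜 d) := by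
  apply Commute.sum_right
  intro m _
  exact (Commute.pow_right (Commute.refl _) m).smul_right _

lemma M_eq (hd : 0 < d) :
    (∑ m ∈ Finset.range d, ((Nat.factorial m : 𝕜))⁻¹ • shift 𝕜 d ^ m) - 1
      = shift 𝕜 d * Vmat 𝕜 d := by
  obtain ⟨e, rfl⟩ : ∃ e, d = e + 1 := ⟨d - 1, by omega⟩
  rw [Finset.sum_range_succ']
  simp only [Nat.factorial_zero, Nat.cast_one, inv_one, pow_zero, one_smul]
  rw [add_sub_cancel_right, Vmat, Finset.mul_sum]
  simp only [Nat.add_sub_cancel]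
  apply Finset.sum_congr rfl
  intro m _
  rw [Matrix.mul_smul, pow_succ']

lemma V_lower (i j : Fin d) (h : (j : ℕ) < (i : ℕ)) : Vmat 𝕜 d i j = 0 := by
  rw [Vmat]
  simp only [Matrix.sum_apply, Matrix.smul_apply, smul_eq_mul]
  apply Finset.sum_eq_zero
  intro m _
  rw [shift_pow]
  have : (j : ℕ) ≠ (i : ℕ) + m := by omega
  simp [this]

lemma V_blockTriangular : (Vmat 𝕜 d).BlockTriangular id := fun i j h => V_lower i j h

lemma V_diag (hd : 1 < d) (i : Fin d) : Vmat 𝕜 d i i = 1 := by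
  obtain ⟨e, rfl⟩ : ∃ e, d = e + 1 := ⟨d - 1, by omega⟩
  rw [Vmat]
  simp only [Matrix.sum_apply, Matrix.smul_apply, smul_eq_mul, shift_pow]
  rw [Finset.sum_eq_single 0]
  · simp
  · intro m _ hm
    have : (i : ℕ) ≠ (i : ℕ) + m := by omega
    simp [this, hm]
  · simp only [Nat.add_sub_cancel]
    intro h
    exact absurd (Finset.mem_range.2 (by omega)) h

/-- last-entry of product with upper triangular left factor -/
lemma mul_last_last (A B : Matrix (Fin d) (Fin d) 𝕜) (hA : A.BlockTriangular id)
    (hd : 0 < d) :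
    (A * B) ⟨d - 1, by omega⟩ ⟨d - 1, by omega⟩
      = A ⟨d - 1, by omega⟩ ⟨d - 1, by omega⟩ * B ⟨d - 1, by omega⟩ ⟨d - 1, by omega⟩ := by
  rw [Matrix.mul_apply, Finset.sum_eq_single (⟨d - 1, by omega⟩ : Fin d)]
  · intro b _ hb
    have hb' : (b : ℕ) < d - 1 := by
      have := b.isLt
      have : (b : ℕ) ≠ d - 1 := fun hc => hb (by simpa [Fin.ext_iff] using hc)
      omega
    rw [hA (show (id b : ℕ) < id (⟨d - 1, by omega⟩ : Fin d) from hb'), zero_mul]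
  · simp

lemma Vpow_last (k : ℕ) (hd : 1 < d) :
    (Vmat 𝕜 d ^ k) ⟨d - 1, by omega⟩ ⟨d - 1, by omega⟩ = 1 := by
  induction k with
  | zero => simp [Matrix.one_apply]
  | succ k ih =>
    rw [pow_succ', mul_last_last _ _ V_blockTriangular (by omega), ih, V_diag hd, one_mul]

end Stmt7Aux

open Stmt7Aux in
/-- Let `S` be the backward shift on `K^(2n)` (`S e₁ = 0`, `S e_k = e_{k-1}` for
`2 ≤ k ≤ 2n`, with `K = ℝ` or `ℂ`). Then `S` and `e^S − I` are similar via an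
invertible upper triangular matrix: there exists an invertible upper triangular `J`
with `S = J⁻¹ (e^S − I) J`. Here `e^S = ∑ S^m/m!` (a finite sum since `S^(2n) = 0`). -/
theorem stmt_7 (𝕜 : Type*) [RCLike 𝕜] (n : ℕ) (hn : 0 < n) :
    ∃ J : Matrix (Fin (2 * n)) (Fin (2 * n)) 𝕜, IsUnit J ∧ J.BlockTriangular id ∧
      (Matrix.of fun i j : Fin (2 * n) => if (j : ℕ) = (i : ℕ) + 1 then (1 : 𝕜) else 0)
        = J⁻¹ *
          ((∑ m ∈ Finset.range (2 * n), ((Nat.factorial m : 𝕜))⁻¹ •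
              (Matrix.of fun i j : Fin (2 * n) =>
                if (j : ℕ) = (i : ℕ) + 1 then (1 : 𝕜) else 0) ^ m) - 1) * J := by
  set d := 2 * n with hd_def
  have hd : 0 < d := by omega
  have hd2 : 1 < d := by omega
  set S : Matrix (Fin d) (Fin d) 𝕜 := shift 𝕜 d with hS
  set M : Matrix (Fin d) (Fin d) 𝕜 :=
    (∑ m ∈ Finset.range d, ((Nat.factorial m : 𝕜))⁻¹ • S ^ m) - 1 with hM
  have hMeq : M = S * Vmat 𝕜 d := M_eq hd
  have hMpow : ∀ k, M ^ k = S ^ k * Vmat 𝕜 d ^ k := by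
    intro k
    rw [hMeq, commute_shift_V.mul_pow]
  have hMd : M ^ d = 0 := by rw [hMpow, shift_pow_ge d le_rfl, zero_mul]
  -- the conjugating matrix
  set last : Fin d := ⟨d - 1, by omega⟩ with hlast
  set J : Matrix (Fin d) (Fin d) 𝕜 :=
    Matrix.of (fun i j : Fin d => (M ^ (d - 1 - (j : ℕ))) i last) with hJ
  -- entries of J
  have hJentry : ∀ i j : Fin d, J i j =
      if h : (i : ℕ) + (d - 1 - (j : ℕ)) < d then
        (Vmat 𝕜 d ^ (d - 1 - (j : ℕ))) ⟨(i : ℕ) + (d - 1 - (j : ℕ)), h⟩ last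
      else 0 := by
    intro i j
    show (M ^ (d - 1 - (j : ℕ))) i last = _
    rw [hMpow, Matrix.mul_apply]
    have h1 : ∀ l : Fin d, (S ^ (d - 1 - (j : ℕ))) i l * (Vmat 𝕜 d ^ (d - 1 - (j : ℕ))) l last
        = if (l : ℕ) = (i : ℕ) + (d - 1 - (j : ℕ)) then
            (Vmat 𝕜 d ^ (d - 1 - (j : ℕ))) l last else 0 := by
      intro l
      rw [hS, shift_pow]
      split_ifs <;> simp
    rw [Finset.sum_congr rfl (fun l _ => h1 l), sum_ite_val]
  -- J is upper triangular
  have hJtri : J.BlockTriangular id := by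
    intro i j (h : (j : ℕ) < (i : ℕ))
    rw [hJentry]
    have hi := i.isLt
    have hcond : ¬ ((i : ℕ) + (d - 1 - (j : ℕ)) < d) := by omega
    simp [hcond]
  -- diagonal of J is 1
  have hJdiag : ∀ i : Fin d, J i i = 1 := by
    intro i
    rw [hJentry]
    have hi := i.isLt
    have hcond : (i : ℕ) + (d - 1 - (i : ℕ)) < d := by omega
    rw [dif_pos hcond]
    have : (⟨(i : ℕ) + (d - 1 - (i : ℕ)), hcond⟩ : Fin d) = last := by
      apply Fin.ext
      show (i : ℕ) + (d - 1 - (i : ℕ)) = d - 1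
      omega
    rw [this, Vpow_last _ hd2]
  -- J is invertible
  have hJdet : J.det = 1 := by
    rw [Matrix.det_of_upperTriangular hJtri]
    simp [hJdiag]
  have hJunit : IsUnit J := (Matrix.isUnit_iff_isUnit_det J).2 (hJdet ▸ isUnit_one)
  -- key intertwining relation
  have hkey : J * S = M * J := by
    ext i j
    have hMJ : (M * J) i j = (M ^ (d - (j : ℕ))) i last := by
      rw [Matrix.mul_apply]
      have : ∀ l : Fin d, M i l * J l j = M i l * (M ^ (d - 1 - (j : ℕ))) l last := fun l => rfl
      rw [Finset.sum_congr rfl (fun l _ => this l), ← Matrix.mul_apply, ← pow_succ']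
      have hj := j.isLt
      rw [show d - 1 - (j : ℕ) + 1 = d - (j : ℕ) from by omega]
    have hJS : (J * S) i j = ∑ l : Fin d, if (l : ℕ) = (j : ℕ) - 1 ∧ 1 ≤ (j : ℕ)
        then J i l else 0 := by
      rw [Matrix.mul_apply]
      apply Finset.sum_congr rfl
      intro l _
      show J i l * (if (j : ℕ) = (l : ℕ) + 1 then 1 else 0) = _
      by_cases h : (j : ℕ) = (l : ℕ) + 1
      · rw [if_pos h, mul_one, if_pos ⟨by omega, by omega⟩]
      · rw [if_neg h, mul_zero, if_neg (fun hh : _ ∧ _ => h (by omega))]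
    rw [hMJ, hJS]
    by_cases hj0 : (j : ℕ) = 0
    · have : ∀ l : Fin d, ¬ ((l : ℕ) = (j : ℕ) - 1 ∧ 1 ≤ (j : ℕ)) := by
        intro l h; omega
      rw [Finset.sum_eq_zero (fun l _ => if_neg (this l))]
      rw [show d - (j : ℕ) = d by omega, hMd]
      simp
    · have hj1 : 1 ≤ (j : ℕ) := by omega
      have hjl : (j : ℕ) - 1 < d := by have := j.isLt; omega
      have : ∀ l : Fin d, (if (l : ℕ) = (j : ℕ) - 1 ∧ 1 ≤ (j : ℕ) then J i l else 0)
          = (if (l : ℕ) = (j : ℕ) - 1 then J i l else 0) := by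
        intro l; simp [hj1]
      rw [Finset.sum_congr rfl (fun l _ => this l), sum_ite_val, dif_pos hjl]
      show (M ^ (d - 1 - ((j : ℕ) - 1))) i last = (M ^ (d - (j : ℕ))) i last
      have := j.isLt
      rw [show d - 1 - ((j : ℕ) - 1) = d - (j : ℕ) from by omega]
  refine ⟨J, hJunit, hJtri, ?_⟩
  have hJinv : J⁻¹ * J = 1 := Matrix.nonsing_inv_mul J (hJdet ▸ isUnit_one)
  calc S = (J⁻¹ * J) * S := by rw [hJinv, one_mul]
    _ = J⁻¹ * (J * S) := by rw [Matrix.mul_assoc]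
    _ = J⁻¹ * (M * J) := by rw [hkey]
    _ = J⁻¹ * M * J := by rw [Matrix.mul_assoc]
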